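/- Define X*, Y*, Z* ∈ 𝒜[ε][[ξ⁻¹,ν⁻¹]] as follows: X* is the unique solution of (ν−ξ)·X* = b(ν)c(ξ) − b(ξ)c(ν); Y* = −2ν⁻¹·b(ξ) + Y₁ where Y₁ is the unique solution of (ν−ξ)·Y₁ = 2(1+a(ν))b(ξ) − 2(1+a(ξ))b(ν); and Z* = 2ν⁻¹·c(ξ) + Z₁ where Z₁ is the unique solution of (ν−ξ)·Z₁ = 2(1+a(ξ))c(ν) − 2(1+a(ν))c(ξ) (each right-hand side is divisible by ν−ξ, being antisymmetric under exchanging ξ and ν). Then W(ξ,ν) := ε⁻¹·[[X*, Y*],[Z*, −X*]] satisfies ε∂(W(ξ,ν)) + [U(ξ), W(ξ,ν)] + [∇(ν)(U(ξ)), R(ξ)] = 0, where ∇(ν)(U(ξ)) = [[0, −∇(ν)(q)],[∇(ν)(r), 0]], as well as 2X* + 2a(ξ)X* + c(ξ)Y* + b(ξ)Z* = 0. -/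

import Mathlib

set_option synthInstance.maxHeartbeats 1000000
set_option maxHeartbeats 1000000

noncomputable section

open scoped BigOperators

/-- Index set of the generators `qᵢ, rᵢ` of 𝒜. -/
inductive NLSVar : Type
  | q : ℕ → NLSVar
  | r : ℕ → NLSVar

/-- 𝒜 = ℂ[q₀, r₀, q₁, r₁, …]. -/
abbrev NLSA : Type := MvPolynomial NLSVar ℂ

/-- 𝒜[ε, ε⁻¹], as Laurent polynomials in ε over 𝒜. -/
abbrev NLSE : Type := LaurentPolynomial NLSA

instance : CommRing NLSE := inferInstance
instance : Algebra ℂ NLSE := inferInstance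

/-- The generator qᵢ viewed in 𝒜[ε,ε⁻¹]. -/
def qv (i : ℕ) : NLSE := LaurentPolynomial.C (MvPolynomial.X (NLSVar.q i))

/-- The generator rᵢ viewed in 𝒜[ε,ε⁻¹]. -/
def rv (i : ℕ) : NLSE := LaurentPolynomial.C (MvPolynomial.X (NLSVar.r i))

/-- ε ∈ 𝒜[ε,ε⁻¹]. -/
def eps : NLSE := LaurentPolynomial.T 1

/-- ε⁻¹ ∈ 𝒜[ε,ε⁻¹]. -/
def epsInv : NLSE := LaurentPolynomial.T (-1)

/-- Membership in the subring 𝒜[ε] ⊆ 𝒜[ε,ε⁻¹]: no negative powers of ε. -/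
def inAE (x : NLSE) : Prop := ∀ n : ℤ, n < 0 → (show ℤ →₀ NLSA from AddMonoidAlgebra.coeff x) n = 0

/-- The Laurent-series ring 𝒜[ε,ε⁻¹][[ξ⁻¹]][ξ]; the Hahn-series exponent `n`
records the power of ξ⁻¹. -/
abbrev NLSL : Type := LaurentSeries NLSE

instance : CommRing NLSL := inferInstance
instance : Algebra ℂ NLSL := inferInstance

/-- ξ as a Laurent series in ξ⁻¹. -/
def xiL : NLSL := HahnSeries.single (-1 : ℤ) 1

/-- Apply a zero-preserving map to all coefficients of a Laurent series. -/
def coeffMap {R S : Type*} [Zero R] [Zero S] (f : ZeroHom R S)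
    (x : HahnSeries ℤ R) : HahnSeries ℤ S where
  coeff n := f (x.coeff n)
  isPWO_support' := x.isPWO_support'.mono (by
    intro n hn
    simp only [Function.mem_support, ne_eq] at hn ⊢
    exact fun h => hn (by rw [h, map_zero]))

/-- The derivation ∂, applied coefficientwise to a Laurent series in ξ⁻¹. -/
def dmap (d : Derivation ℂ NLSE NLSE) : NLSL → NLSL :=
  coeffMap ⟨fun x => d x, map_zero d⟩

/-- `∂` is the (unique) derivation of 𝒜[ε,ε⁻¹] with ∂(qᵢ)=qᵢ₊₁, ∂(rᵢ)=rᵢ₊₁, ∂(ε)=0. -/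
def IsDel (del : Derivation ℂ NLSE NLSE) : Prop :=
  (∀ i, del (qv i) = qv (i + 1)) ∧ (∀ i, del (rv i) = rv (i + 1)) ∧ del eps = 0

/-- The constant embedding 𝒜[ε,ε⁻¹] → 𝒜[ε,ε⁻¹][[ξ⁻¹]][ξ]. -/
def CL (x : NLSE) : NLSL := HahnSeries.C x

/-- The matrix U(ξ) = [[−ξ, −q],[r, ξ]]. -/
def Umat : Matrix (Fin 2) (Fin 2) NLSL :=
  !![-xiL, -(CL (qv 0)); CL (rv 0), xiL]

/-- The matrix [[2+a, b],[c, −a]]. -/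
def Rmat (a b c : NLSL) : Matrix (Fin 2) (Fin 2) NLSL := !![2 + a, b; c, -a]

/-- `a, b, c` are the entries of the (unique) basic matrix resolvent
R(ξ) = [[2+a(ξ), b(ξ)],[c(ξ), −a(ξ)]]. -/
def IsMR (del : Derivation ℂ NLSE NLSE) (a b c : NLSL) : Prop :=
  (∀ n : ℤ, n ≤ 0 → a.coeff n = 0) ∧
  (∀ n : ℤ, n ≤ 0 → b.coeff n = 0) ∧
  (∀ n : ℤ, n ≤ 0 → c.coeff n = 0) ∧
  (∀ n : ℤ, inAE (a.coeff n)) ∧ (∀ n : ℤ, inAE (b.coeff n)) ∧ (∀ n : ℤ, inAE (c.coeff n)) ∧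
  CL eps • (Rmat a b c).map (dmap del)
      + (Umat * Rmat a b c - Rmat a b c * Umat) = 0 ∧
  (Rmat a b c).det = 0

/-- A_j, the ξ^{−j−1}-coefficient of a(ξ). -/
def coA (a : NLSL) (j : ℕ) : NLSE := a.coeff (j + 1 : ℤ)

/-- The NLS derivations D_j: derivations of 𝒜[ε,ε⁻¹] commuting with ∂, annihilating ε,
with D_j(q) = 2^{j+1} ε⁻¹ B_{j+1} and D_j(r) = 2^{j+1} ε⁻¹ C_{j+1}. -/
def IsNLSD (del : Derivation ℂ NLSE NLSE) (b c : NLSL)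
    (D : ℕ → Derivation ℂ NLSE NLSE) : Prop :=
  (∀ j x, D j (del x) = del (D j x)) ∧
  (∀ j, D j eps = 0) ∧
  (∀ j, D j (qv 0) = (2 : NLSE) ^ (j + 1) * epsInv * coA b (j + 1)) ∧
  (∀ j, D j (rv 0) = (2 : NLSE) ^ (j + 1) * epsInv * coA c (j + 1))

end

noncomputable section

/-- The two-variable Laurent-series ring 𝒜[ε,ε⁻¹][[ξ⁻¹,ν⁻¹]][ξ,ν]; the outer
Hahn-series exponent records the power of ν⁻¹, the inner one the power of ξ⁻¹. -/
abbrev NLSL2 : Type := HahnSeries ℤ NLSL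

instance : CommRing NLSL2 := inferInstance
instance : Algebra ℂ NLSL2 := inferInstance

/-- Embedding of series in ξ (constant in ν). -/
def toXi (x : NLSL) : NLSL2 := HahnSeries.C x

/-- A series in ξ re-read as the corresponding series in ν. -/
def toNu (x : NLSL) : NLSL2 :=
  coeffMap ⟨fun e => (HahnSeries.C e : NLSL), map_zero _⟩ x

/-- ν. -/
def nuL : NLSL2 := HahnSeries.single (-1 : ℤ) 1

/-- ν⁻¹. -/
def nuInv : NLSL2 := HahnSeries.single (1 : ℤ) 1

/-- ξ, in the two-variable ring. -/
def xiL2 : NLSL2 := toXi xiL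

/-- ε, in the two-variable ring. -/
def epsL2 : NLSL2 := toXi (CL eps)

lemma dmap_zero (d : Derivation ℂ NLSE NLSE) : dmap d 0 = 0 := by
  ext n
  simp [dmap, coeffMap]

/-- ∂ applied to all 𝒜[ε,ε⁻¹]-coefficients of a two-variable series. -/
def dmap2 (d : Derivation ℂ NLSE NLSE) : NLSL2 → NLSL2 :=
  coeffMap ⟨dmap d, dmap_zero d⟩

/-- The loop operator ∇(ν) = Σ_{j≥0} 2^{−j} ν^{−j−2} D_j, applied to a series in ξ. -/
def nabla (D : ℕ → Derivation ℂ NLSE NLSE) (x : NLSL) : NLSL2 :=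
  HahnSeries.single (2 : ℤ) (1 : NLSL) *
    HahnSeries.ofPowerSeries ℤ NLSL
      (PowerSeries.mk fun j => ((2 : ℂ) ^ j)⁻¹ • dmap (D j) x)

end
noncomputable section

/-- U(ξ), in the two-variable ring. -/
def UXi : Matrix (Fin 2) (Fin 2) NLSL2 := Umat.map toXi

/-- ∇(ν)(U(ξ)) = [[0, −∇(ν)(q)],[∇(ν)(r), 0]]. -/
def nablaU (D : ℕ → Derivation ℂ NLSE NLSE) : Matrix (Fin 2) (Fin 2) NLSL2 :=
  !![0, -(nabla D (CL (qv 0))); nabla D (CL (rv 0)), 0]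

/-- R(ξ), in the two-variable ring. -/
def RXi' (a b c : NLSL) : Matrix (Fin 2) (Fin 2) NLSL2 := (Rmat a b c).map toXi

/-- Membership in 𝒜[ε][[ξ⁻¹,ν⁻¹]]. -/
def memAE2 (w : NLSL2) : Prop :=
  (∀ m : ℤ, m < 0 → w.coeff m = 0) ∧
  (∀ m n : ℤ, n < 0 → (w.coeff m).coeff n = 0) ∧
  (∀ m n : ℤ, inAE ((w.coeff m).coeff n))

section Helpers

lemma coeffMap_coeff {R S : Type*} [Zero R] [Zero S] (f : ZeroHom R S)
    (x : HahnSeries ℤ R) (n : ℤ) : (coeffMap f x).coeff n = f (x.coeff n) := rfl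

lemma coeffMap_support_subset {R S : Type*} [Zero R] [Zero S] (f : ZeroHom R S)
    (x : HahnSeries ℤ R) : (coeffMap f x).support ⊆ x.support := by
  intro g hg
  simp only [HahnSeries.mem_support, coeffMap_coeff] at hg ⊢
  exact fun h => hg (by rw [h, map_zero])

lemma coeffMap_add {R S : Type*} [AddCommMonoid R] [AddCommMonoid S] (f : ZeroHom R S)
    (hadd : ∀ a b : R, f (a + b) = f a + f b) (x y : HahnSeries ℤ R) :
    coeffMap f (x + y) = coeffMap f x + coeffMap f y := by
  ext n
  simp [coeffMap_coeff, HahnSeries.coeff_add, hadd]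

lemma coeffMap_deriv_mul {R : Type*} [CommRing R] (f : ZeroHom R R)
    (hadd : ∀ a b : R, f (a + b) = f a + f b)
    (hmul : ∀ a b : R, f (a * b) = f a * b + a * f b) (x y : HahnSeries ℤ R) :
    coeffMap f (x * y) = coeffMap f x * y + x * coeffMap f y := by
  ext n
  have hs : ∀ (s : Finset (ℤ × ℤ)) (g : ℤ × ℤ → R),
      f (∑ ij ∈ s, g ij) = ∑ ij ∈ s, f (g ij) := fun s g =>
    map_sum (AddMonoidHom.mk' (⇑f) hadd) g s
  rw [HahnSeries.coeff_add,
    HahnSeries.coeff_mul_left' x.isPWO_support (coeffMap_support_subset f x),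
    HahnSeries.coeff_mul_right' y.isPWO_support (coeffMap_support_subset f y),
    coeffMap_coeff, HahnSeries.coeff_mul, hs, ← Finset.sum_add_distrib]
  exact Finset.sum_congr rfl fun ij _ => hmul _ _

end Helpers

section DmapLemmas

variable (del : Derivation ℂ NLSE NLSE)

lemma coeffMap_single {R S : Type*} [Zero R] [Zero S] (f : ZeroHom R S) (a : ℤ) (r : R) :
    coeffMap f (HahnSeries.single a r) = HahnSeries.single a (f r) := by
  ext n
  rw [coeffMap_coeff, HahnSeries.coeff_single, HahnSeries.coeff_single]
  split <;> simp

lemma dmap_coeff (x : NLSL) (n : ℤ) : (dmap del x).coeff n = del (x.coeff n) := rfl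

lemma dmap_add (x y : NLSL) : dmap del (x + y) = dmap del x + dmap del y :=
  coeffMap_add _ (fun a b => del.map_add a b) x y

lemma dmap_mul (x y : NLSL) : dmap del (x * y) = dmap del x * y + x * dmap del y :=
  coeffMap_deriv_mul _ (fun a b => del.map_add a b)
    (fun a b => by
      show del (a * b) = del a * b + a * del b
      rw [del.leibniz, smul_eq_mul, smul_eq_mul]; ring) x y

lemma dmap_C (e : NLSE) : dmap del (HahnSeries.C e) = HahnSeries.C (del e) := by
  rw [HahnSeries.C_apply, HahnSeries.C_apply]
  exact coeffMap_single _ _ _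

lemma dmap_xiL : dmap del xiL = 0 := by
  rw [xiL]
  show coeffMap _ _ = 0
  rw [coeffMap_single]
  simp

lemma dmap2_coeff (x : NLSL2) (n : ℤ) : (dmap2 del x).coeff n = dmap del (x.coeff n) := rfl

lemma dmap2_add (x y : NLSL2) : dmap2 del (x + y) = dmap2 del x + dmap2 del y :=
  coeffMap_add _ (fun a b => dmap_add del a b) x y

lemma dmap2_mul (x y : NLSL2) : dmap2 del (x * y) = dmap2 del x * y + x * dmap2 del y :=
  coeffMap_deriv_mul _ (fun a b => dmap_add del a b) (fun a b => dmap_mul del a b) x y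

lemma hahn_extL {x y : NLSL} (h : ∀ n, x.coeff n = y.coeff n) : x = y :=
  HahnSeries.ext (funext h)

lemma hahn_ext2 {x y : NLSL2} (h : ∀ n, x.coeff n = y.coeff n) : x = y :=
  HahnSeries.ext (funext h)

lemma dmap_neg (x : NLSL) : dmap del (-x) = -(dmap del x) := by
  apply hahn_extL; intro n
  rw [dmap_coeff, HahnSeries.coeff_neg, HahnSeries.coeff_neg, dmap_coeff, map_neg]

lemma dmap2_neg (x : NLSL2) : dmap2 del (-x) = -(dmap2 del x) := by
  apply hahn_ext2; intro n
  rw [dmap2_coeff, HahnSeries.coeff_neg, HahnSeries.coeff_neg, dmap2_coeff, dmap_neg]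

lemma dmap2_toXi (x : NLSL) : dmap2 del (toXi x) = toXi (dmap del x) := by
  rw [toXi, toXi, HahnSeries.C_apply, HahnSeries.C_apply]
  exact coeffMap_single _ _ _

lemma dmap2_toNu (x : NLSL) : dmap2 del (toNu x) = toNu (dmap del x) := by
  apply hahn_ext2; intro n
  rw [dmap2_coeff]
  show dmap del (HahnSeries.C (x.coeff n)) = HahnSeries.C ((dmap del x).coeff n)
  rw [dmap_C, dmap_coeff]

lemma dmap2_one : dmap2 del (1 : NLSL2) = 0 := by
  rw [← HahnSeries.single_zero_one]
  show coeffMap _ _ = 0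
  rw [coeffMap_single]
  show HahnSeries.single _ (dmap del 1) = 0
  rw [← HahnSeries.single_zero_one]
  show HahnSeries.single _ (coeffMap _ _) = 0
  rw [coeffMap_single]
  simp

lemma dmap2_nuL : dmap2 del nuL = 0 := by
  rw [nuL]
  show coeffMap _ _ = 0
  rw [coeffMap_single]
  show HahnSeries.single _ (dmap del 1) = 0
  rw [← HahnSeries.single_zero_one]
  show HahnSeries.single _ (coeffMap _ _) = 0
  rw [coeffMap_single]
  simp

lemma dmap2_nuInv : dmap2 del nuInv = 0 := by
  rw [nuInv]
  show coeffMap _ _ = 0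
  rw [coeffMap_single]
  show HahnSeries.single _ (dmap del 1) = 0
  rw [← HahnSeries.single_zero_one]
  show HahnSeries.single _ (coeffMap _ _) = 0
  rw [coeffMap_single]
  simp

lemma dmap2_xiL2 : dmap2 del xiL2 = 0 := by
  rw [xiL2, dmap2_toXi, dmap_xiL]
  show HahnSeries.C (0 : NLSL) = 0
  simp

end DmapLemmas

section ToNuLemmas

lemma toNu_coeff (x : NLSL) (n : ℤ) : (toNu x).coeff n = HahnSeries.C (x.coeff n) := rfl

lemma toNu_eq_map (x : NLSL) :
    toNu x = x.map ((HahnSeries.C : NLSE →+* NLSL) : NLSE →ₙ+* NLSL) := by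
  ext n; rfl

/-- toNu as a ring homomorphism. -/
def toNuHom : NLSL →+* NLSL2 where
  toFun := toNu
  map_one' := by
    rw [← HahnSeries.single_zero_one]
    show coeffMap _ _ = 1
    rw [coeffMap_single]
    show HahnSeries.single _ ((HahnSeries.C : NLSE →+* NLSL) 1) = 1
    rw [map_one, HahnSeries.single_zero_one]
  map_mul' x y := by
    show toNu (x * y) = toNu x * toNu y
    rw [toNu_eq_map, toNu_eq_map, toNu_eq_map]
    exact HahnSeries.map_mul _
  map_zero' := by
    ext n
    simp [toNu_coeff]
  map_add' x y :=
    coeffMap_add _ (fun a b => by show HahnSeries.C _ = _; rw [map_add]; rfl) x y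

lemma toNuHom_apply (x : NLSL) : toNuHom x = toNu x := rfl

lemma toNu_xiL : toNu xiL = nuL := by
  rw [xiL]
  show coeffMap _ _ = nuL
  rw [coeffMap_single]
  show HahnSeries.single _ ((HahnSeries.C : NLSE →+* NLSL) 1) = nuL
  rw [map_one, nuL]

lemma toNu_CL (e : NLSE) : toNu (CL e) = toXi (CL e) := by
  rw [CL, HahnSeries.C_apply]
  show coeffMap _ _ = _
  rw [coeffMap_single, toXi]
  show _ = HahnSeries.C (HahnSeries.single (0:ℤ) e)
  rw [HahnSeries.C_apply]
  rfl

end ToNuLemmas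

section Constants

lemma eps_mul_epsInv : eps * epsInv = (1 : NLSE) := by
  rw [eps, epsInv, ← LaurentPolynomial.T_add]
  norm_num

lemma epsL2_mul_epsInv : epsL2 * toXi (CL epsInv) = 1 := by
  rw [epsL2, toXi, toXi, CL, CL, ← map_mul, ← map_mul, eps_mul_epsInv, map_one, map_one]

lemma nu_mul_nuInv : nuL * nuInv = 1 := by
  rw [nuL, nuInv, HahnSeries.single_mul_single]
  norm_num

example : NoZeroDivisors NLSL2 := inferInstance

lemma nuxi_ne : nuL - xiL2 ≠ 0 := by
  intro h
  have h1 : (nuL - xiL2).coeff (-1) = 0 := by rw [h]; rfl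
  rw [HahnSeries.coeff_sub, nuL, HahnSeries.coeff_single_same, xiL2, toXi,
    HahnSeries.C_apply, HahnSeries.coeff_single_of_ne (by norm_num), sub_zero] at h1
  exact one_ne_zero h1

variable (del : Derivation ℂ NLSE NLSE)

lemma del_epsInv (hdel : IsDel del) : del epsInv = 0 := by
  have h1 : del (eps * epsInv) = 0 := by
    rw [eps_mul_epsInv]
    exact del.map_one_eq_zero
  rw [del.leibniz, smul_eq_mul, smul_eq_mul, hdel.2.2, mul_zero, add_zero] at h1
  calc del epsInv = (epsInv * eps) * del epsInv := by
        rw [mul_comm epsInv eps, eps_mul_epsInv, one_mul]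
    _ = epsInv * (eps * del epsInv) := by ring
    _ = 0 := by rw [h1, mul_zero]

lemma dmap2_EI (hdel : IsDel del) : dmap2 del (toXi (CL epsInv)) = 0 := by
  rw [dmap2_toXi, CL, dmap_C, del_epsInv del hdel]
  show toXi (HahnSeries.C (0:NLSE)) = 0
  rw [map_zero, toXi, map_zero]

lemma dmap2_two : dmap2 del (2 : NLSL2) = 0 := by
  have : (2 : NLSL2) = 1 + 1 := by norm_num
  rw [this, dmap2_add, dmap2_one, add_zero]

end Constants

section NablaLemmas

lemma nabla_coeff_neg (D : ℕ → Derivation ℂ NLSE NLSE) (x : NLSL) (m : ℤ) (hm : m < 2) :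
    (nabla D x).coeff m = 0 := by
  rw [nabla]
  have h1 : m = (m - 2) + 2 := by ring
  rw [h1, HahnSeries.coeff_single_mul_add, one_mul]
  rw [HahnSeries.ofPowerSeries_apply]
  apply HahnSeries.embDomain_notin_range
  rintro ⟨n, hn⟩
  have hn' : (n : ℤ) = m - 2 := hn
  omega

lemma nabla_coeff_ge (D : ℕ → Derivation ℂ NLSE NLSE) (x : NLSL) (m : ℤ) (hm : 2 ≤ m) :
    (nabla D x).coeff m
      = ((2 : ℂ) ^ (m - 2).toNat)⁻¹ • dmap (D ((m - 2).toNat)) x := by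
  rw [nabla]
  have h1 : m = ((m - 2).toNat : ℤ) + 2 := by omega
  conv_lhs => rw [h1]
  rw [HahnSeries.coeff_single_mul_add, one_mul,
    HahnSeries.ofPowerSeries_apply_coeff, PowerSeries.coeff_mk]

lemma smul_CL (z : ℂ) (e : NLSE) :
    z • (HahnSeries.C e : NLSL) = HahnSeries.C (z • e) := by
  apply hahn_extL; intro n
  rw [HahnSeries.coeff_smul, HahnSeries.C_apply, HahnSeries.C_apply,
    HahnSeries.coeff_single, HahnSeries.coeff_single]
  split <;> simp

lemma dmap_CL_const (d : Derivation ℂ NLSE NLSE) (e : NLSE) :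
    dmap d (CL e) = CL (d e) := by
  rw [CL, CL]; exact dmap_C d e

lemma key_scalar (j : ℕ) (B : NLSE) :
    eps * (((2 : ℂ) ^ j)⁻¹ • ((2 : NLSE) ^ (j + 1) * epsInv * B)) = 2 * B := by
  have h2' : algebraMap ℂ NLSE (((2 : ℂ) ^ j)⁻¹) * (2 : NLSE) ^ (j + 1) = 2 := by
    rw [show (2 : NLSE) = algebraMap ℂ NLSE 2 from (map_ofNat _ 2).symm, ← map_pow, ← map_mul]
    rw [show ((2 : ℂ) ^ j)⁻¹ * 2 ^ (j + 1) = 2 by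
      rw [pow_succ, ← mul_assoc, inv_mul_cancel₀ (pow_ne_zero _ two_ne_zero), one_mul]]
  rw [Algebra.smul_def]
  linear_combination (eps * epsInv * B) * h2' + 2 * B * eps_mul_epsInv

end NablaLemmas

section CoeffHelpers

lemma two_mul_coeffL (y : NLSL) (n : ℤ) : ((2 : NLSL) * y).coeff n = 2 * y.coeff n := by
  rw [two_mul, HahnSeries.coeff_add, two_mul]

lemma CL_mul_coeff (e : NLSE) (y : NLSL) (n : ℤ) : (CL e * y).coeff n = e * y.coeff n := by
  rw [CL, HahnSeries.C_apply, HahnSeries.coeff_single_zero_mul]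

lemma xiL_mul_coeff (y : NLSL) (n : ℤ) : (xiL * y).coeff n = y.coeff (n + 1) := by
  conv_lhs => rw [show n = (n + 1) + (-1) by ring]
  rw [xiL, HahnSeries.coeff_single_mul_add, one_mul]

lemma two_mul_coeff2 (y : NLSL2) (n : ℤ) : ((2 : NLSL2) * y).coeff n = 2 * y.coeff n := by
  rw [two_mul, HahnSeries.coeff_add, two_mul]

lemma toXi_mul_coeff (z : NLSL) (y : NLSL2) (n : ℤ) :
    (toXi z * y).coeff n = z * y.coeff n := by
  rw [toXi, HahnSeries.C_apply, HahnSeries.coeff_single_zero_mul]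

lemma smul_CL' (z : ℂ) (e : NLSE) : z • CL e = CL (z • e) := by
  rw [CL, CL]; exact smul_CL z e

lemma CL_mul_CL (x y : NLSE) : CL x * CL y = CL (x * y) := by
  rw [CL, CL, CL]; exact (map_mul _ _ _).symm

lemma two_mul_CL (e : NLSE) : (2 : NLSL) * CL e = CL (2 * e) := by
  rw [two_mul, two_mul, CL, CL, map_add]

lemma toNu_coeff' (x : NLSL) (n : ℤ) : (toNu x).coeff n = CL (x.coeff n) := rfl

lemma dmap_one (del : Derivation ℂ NLSE NLSE) : dmap del (1 : NLSL) = 0 := by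
  rw [← HahnSeries.single_zero_one]
  show coeffMap _ _ = 0
  rw [coeffMap_single]
  show HahnSeries.single _ (del 1) = 0
  rw [del.map_one_eq_zero]
  simp

lemma dmap_two (del : Derivation ℂ NLSE NLSE) : dmap del (2 : NLSL) = 0 := by
  have : (2 : NLSL) = 1 + 1 := by norm_num
  rw [this, dmap_add, dmap_one, add_zero]

end CoeffHelpers

section ResolventEqs

variable (del : Derivation ℂ NLSE NLSE) (a b c : NLSL)

lemma res_e1 (hR : IsMR del a b c) :
    CL eps * dmap del b = 2 * (xiL * b) - 2 * (CL (qv 0) * (1 + a)) := by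
  obtain ⟨_, _, _, _, _, _, hres, _⟩ := hR
  have h01 : (CL eps • (Rmat a b c).map (dmap del)
      + (Umat * Rmat a b c - Rmat a b c * Umat)) 0 1 = 0 := by rw [hres]; rfl
  simp [Rmat, Umat, Matrix.mul_apply, Fin.sum_univ_two, smul_eq_mul] at h01
  linear_combination h01

lemma res_e2 (hR : IsMR del a b c) :
    CL eps * dmap del c = -(2 * (xiL * c)) - 2 * (CL (rv 0) * (1 + a)) := by
  obtain ⟨_, _, _, _, _, _, hres, _⟩ := hR
  have h10 : (CL eps • (Rmat a b c).map (dmap del)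
      + (Umat * Rmat a b c - Rmat a b c * Umat)) 1 0 = 0 := by rw [hres]; rfl
  simp [Rmat, Umat, Matrix.mul_apply, Fin.sum_univ_two, smul_eq_mul] at h10
  linear_combination h10

lemma res_e3 (hR : IsMR del a b c) :
    CL eps * dmap del a = CL (qv 0) * c + CL (rv 0) * b := by
  obtain ⟨_, _, _, _, _, _, hres, _⟩ := hR
  have h00 : (CL eps • (Rmat a b c).map (dmap del)
      + (Umat * Rmat a b c - Rmat a b c * Umat)) 0 0 = 0 := by rw [hres]; rfl
  simp [Rmat, Umat, Matrix.mul_apply, Fin.sum_univ_two, smul_eq_mul,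
    dmap_add, dmap_two] at h00
  linear_combination h00

lemma coeff_B0 (hR : IsMR del a b c) : (2 : NLSE) * b.coeff 1 = 2 * qv 0 := by
  have h := congrArg (fun z : NLSL => z.coeff 0) (res_e1 del a b c hR)
  rw [HahnSeries.coeff_sub, two_mul_coeffL, two_mul_coeffL, xiL_mul_coeff,
    CL_mul_coeff, CL_mul_coeff, HahnSeries.coeff_add, dmap_coeff,
    hR.2.1 0 le_rfl, map_zero, mul_zero, hR.1 0 le_rfl, HahnSeries.coeff_one] at h
  norm_num at h
  linear_combination -h

lemma coeff_C0 (hR : IsMR del a b c) : (2 : NLSE) * c.coeff 1 = 2 * (-(rv 0)) := by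
  have h := congrArg (fun z : NLSL => z.coeff 0) (res_e2 del a b c hR)
  rw [HahnSeries.coeff_sub, HahnSeries.coeff_neg, two_mul_coeffL, two_mul_coeffL,
    xiL_mul_coeff, CL_mul_coeff, CL_mul_coeff, HahnSeries.coeff_add, dmap_coeff,
    hR.2.2.1 0 le_rfl, map_zero, mul_zero, hR.1 0 le_rfl, HahnSeries.coeff_one] at h
  norm_num at h
  linear_combination h

end ResolventEqs

section NablaMain

variable (del : Derivation ℂ NLSE NLSE) (a b c : NLSL) (D : ℕ → Derivation ℂ NLSE NLSE)

lemma nabla_q (hR : IsMR del a b c) (hD : IsNLSD del b c D) :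
    epsL2 * nabla D (CL (qv 0)) = 2 * (toNu b - toXi (CL (qv 0)) * nuInv) := by
  apply hahn_ext2; intro m
  have hQnu : toXi (CL (qv 0)) * nuInv = HahnSeries.single (1 : ℤ) (CL (qv 0)) := by
    rw [toXi, nuInv, HahnSeries.C_apply, HahnSeries.single_mul_single, zero_add, mul_one]
  rw [epsL2, toXi_mul_coeff, two_mul_coeff2, HahnSeries.coeff_sub, toNu_coeff',
    hQnu, HahnSeries.coeff_single]
  rcases lt_or_ge m 2 with hm | hm
  · rw [nabla_coeff_neg _ _ _ hm, mul_zero]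
    rcases eq_or_ne m 1 with rfl | hne
    · rw [if_pos rfl]
      have h2 := coeff_B0 del a b c hR
      have : CL (b.coeff 1) - CL (qv 0) = CL (b.coeff 1 - qv 0) := by
        rw [CL, CL, CL, map_sub]
      rw [this, two_mul_CL]
      rw [show (2 : NLSE) * (b.coeff 1 - qv 0) = 0 by linear_combination h2]
      rw [CL, map_zero]
    · rw [if_neg hne]
      have hb0 : b.coeff m = 0 := hR.2.1 m (by omega)
      rw [hb0, sub_zero, CL, map_zero, mul_zero]
  · rw [nabla_coeff_ge _ _ _ hm, if_neg (by omega)]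
    set j := (m - 2).toNat with hj
    rw [dmap_CL_const, hD.2.2.1 j, smul_CL', CL_mul_CL, sub_zero, two_mul_CL]
    have hco : coA b (j + 1) = b.coeff m := by
      rw [coA]
      congr 1
      omega
    rw [show eps * ((2 : ℂ) ^ j)⁻¹ • ((2:NLSE) ^ (j + 1) * epsInv * coA b (j + 1))
        = 2 * b.coeff m by rw [← hco]; exact key_scalar j _]

lemma nabla_r (hR : IsMR del a b c) (hD : IsNLSD del b c D) :
    epsL2 * nabla D (CL (rv 0)) = 2 * (toNu c + toXi (CL (rv 0)) * nuInv) := by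
  apply hahn_ext2; intro m
  have hQnu : toXi (CL (rv 0)) * nuInv = HahnSeries.single (1 : ℤ) (CL (rv 0)) := by
    rw [toXi, nuInv, HahnSeries.C_apply, HahnSeries.single_mul_single, zero_add, mul_one]
  rw [epsL2, toXi_mul_coeff, two_mul_coeff2, HahnSeries.coeff_add, toNu_coeff',
    hQnu, HahnSeries.coeff_single]
  rcases lt_or_ge m 2 with hm | hm
  · rw [nabla_coeff_neg _ _ _ hm, mul_zero]
    rcases eq_or_ne m 1 with rfl | hne
    · rw [if_pos rfl]
      have h2 := coeff_C0 del a b c hR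
      have : CL (c.coeff 1) + CL (rv 0) = CL (c.coeff 1 + rv 0) := by
        rw [CL, CL, CL, map_add]
      rw [this, two_mul_CL]
      rw [show (2 : NLSE) * (c.coeff 1 + rv 0) = 0 by linear_combination h2]
      rw [CL, map_zero]
    · rw [if_neg hne]
      have hc0 : c.coeff m = 0 := hR.2.2.1 m (by omega)
      rw [hc0]
      simp [CL]
  · rw [nabla_coeff_ge _ _ _ hm, if_neg (by omega)]
    set j := (m - 2).toNat with hj
    rw [dmap_CL_const, hD.2.2.2 j, smul_CL', CL_mul_CL, add_zero, two_mul_CL]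
    have hco : coA c (j + 1) = c.coeff m := by
      rw [coA]
      congr 1
      omega
    rw [show eps * ((2 : ℂ) ^ j)⁻¹ • ((2:NLSE) ^ (j + 1) * epsInv * coA c (j + 1))
        = 2 * c.coeff m by rw [← hco]; exact key_scalar j _]

end NablaMain

section MainAux

lemma dmap2_sub (del : Derivation ℂ NLSE NLSE) (x y : NLSL2) :
    dmap2 del (x - y) = dmap2 del x - dmap2 del y := by
  rw [sub_eq_add_neg, dmap2_add, dmap2_neg, sub_eq_add_neg]

def toXiHom : NLSL →+* NLSL2 := HahnSeries.C

lemma toXiHom_apply (x : NLSL) : toXiHom x = toXi x := rfl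

lemma toXi_neg (x : NLSL) : toXi (-x) = -toXi x := by
  rw [toXi, toXi]; exact map_neg _ _

lemma toXi_add (x y : NLSL) : toXi (x + y) = toXi x + toXi y := by
  rw [toXi, toXi, toXi]; exact map_add _ _ _

lemma toXi_two : toXi (2 : NLSL) = 2 := map_ofNat (HahnSeries.C) 2

lemma toXi_xiL : toXi xiL = xiL2 := rfl

end MainAux

/-- the explicit solution (X*, Y*, Z*) of the equations of Lemma 2.1. -/
theorem nls_explicit_W_solves
    (del : Derivation ℂ NLSE NLSE) (hdel : IsDel del)
    (a b c : NLSL) (hR : IsMR del a b c)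
    (D : ℕ → Derivation ℂ NLSE NLSE) (hD : IsNLSD del b c D)
    (Xs Y1 Z1 : NLSL2)
    (hXmem : memAE2 Xs) (hYmem : memAE2 Y1) (hZmem : memAE2 Z1)
    (hX : (nuL - xiL2) * Xs = toNu b * toXi c - toXi b * toNu c)
    (hY : (nuL - xiL2) * Y1
        = 2 * (1 + toNu a) * toXi b - 2 * (1 + toXi a) * toNu b)
    (hZ : (nuL - xiL2) * Z1
        = 2 * (1 + toXi a) * toNu c - 2 * (1 + toNu a) * toXi c) :
    (epsL2 • (toXi (CL epsInv) • !![Xs, -(2 * (nuInv * toXi b)) + Y1;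
          2 * (nuInv * toXi c) + Z1, -Xs]).map (dmap2 del)
        + (UXi * (toXi (CL epsInv) • !![Xs, -(2 * (nuInv * toXi b)) + Y1;
            2 * (nuInv * toXi c) + Z1, -Xs])
          - (toXi (CL epsInv) • !![Xs, -(2 * (nuInv * toXi b)) + Y1;
            2 * (nuInv * toXi c) + Z1, -Xs]) * UXi)
        + (nablaU D * RXi' a b c - RXi' a b c * nablaU D) = 0) ∧
    (2 * Xs + 2 * toXi a * Xs + toXi c * (-(2 * (nuInv * toXi b)) + Y1)
        + toXi b * (2 * (nuInv * toXi c) + Z1) = 0) := by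
  have e1L := res_e1 del a b c hR
  have e2L := res_e2 del a b c hR
  have e3L := res_e3 del a b c hR
  have e1x : epsL2 * toXi (dmap del b)
      = 2 * (xiL2 * toXi b) - 2 * (toXi (CL (qv 0)) * (1 + toXi a)) := by
    have h := congrArg toXiHom e1L
    simp only [map_mul, map_sub, map_add, map_one, map_ofNat, toXiHom_apply] at h
    exact h
  have e2x : epsL2 * toXi (dmap del c)
      = -(2 * (xiL2 * toXi c)) - 2 * (toXi (CL (rv 0)) * (1 + toXi a)) := by
    have h := congrArg toXiHom e2L
    simp only [map_mul, map_sub, map_add, map_neg, map_one, map_ofNat, toXiHom_apply] at h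
    exact h
  have e3x : epsL2 * toXi (dmap del a)
      = toXi (CL (qv 0)) * toXi c + toXi (CL (rv 0)) * toXi b := by
    have h := congrArg toXiHom e3L
    simp only [map_mul, map_sub, map_add, map_one, map_ofNat, toXiHom_apply] at h
    exact h
  have e1n : epsL2 * toNu (dmap del b)
      = 2 * (nuL * toNu b) - 2 * (toXi (CL (qv 0)) * (1 + toNu a)) := by
    have h := congrArg toNuHom e1L
    simp only [map_mul, map_sub, map_add, map_one, map_ofNat, toNuHom_apply,
      toNu_xiL, toNu_CL] at h
    exact h
  have e2n : epsL2 * toNu (dmap del c)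
      = -(2 * (nuL * toNu c)) - 2 * (toXi (CL (rv 0)) * (1 + toNu a)) := by
    have h := congrArg toNuHom e2L
    simp only [map_mul, map_sub, map_add, map_neg, map_one, map_ofNat, toNuHom_apply,
      toNu_xiL, toNu_CL] at h
    exact h
  have e3n : epsL2 * toNu (dmap del a)
      = toXi (CL (qv 0)) * toNu c + toXi (CL (rv 0)) * toNu b := by
    have h := congrArg toNuHom e3L
    simp only [map_mul, map_sub, map_add, map_one, map_ofNat, toNuHom_apply,
      toNu_xiL, toNu_CL] at h
    exact h
  have hNq := nabla_q del a b c D hR hD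
  have hNr := nabla_r del a b c D hR hD
  have hE := epsL2_mul_epsInv
  have H1 : (nuL - xiL2) * dmap2 del Xs
      = toNu (dmap del b) * toXi c + toNu b * toXi (dmap del c)
        - (toXi (dmap del b) * toNu c + toXi b * toNu (dmap del c)) := by
    have h := congrArg (dmap2 del) hX
    simp only [dmap2_mul, dmap2_sub, dmap2_nuL, dmap2_xiL2, dmap2_toNu, dmap2_toXi] at h
    linear_combination h
  have H2 : (nuL - xiL2) * dmap2 del Y1
      = 2 * toNu (dmap del a) * toXi b + 2 * (1 + toNu a) * toXi (dmap del b)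
        - (2 * toXi (dmap del a) * toNu b + 2 * (1 + toXi a) * toNu (dmap del b)) := by
    have h := congrArg (dmap2 del) hY
    simp only [dmap2_mul, dmap2_sub, dmap2_add, dmap2_two, dmap2_one, dmap2_nuL,
      dmap2_xiL2, dmap2_toNu, dmap2_toXi] at h
    linear_combination h
  have H3 : (nuL - xiL2) * dmap2 del Z1
      = 2 * toXi (dmap del a) * toNu c + 2 * (1 + toXi a) * toNu (dmap del c)
        - (2 * toNu (dmap del a) * toXi c + 2 * (1 + toNu a) * toXi (dmap del c)) := by
    have h := congrArg (dmap2 del) hZ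
    simp only [dmap2_mul, dmap2_sub, dmap2_add, dmap2_two, dmap2_one, dmap2_nuL,
      dmap2_xiL2, dmap2_toNu, dmap2_toXi] at h
    linear_combination h
  have f00 : epsL2 * dmap2 del Xs
      - toXi (CL (qv 0)) * (2 * (nuInv * toXi c) + Z1)
      - toXi (CL (rv 0)) * (-(2 * (nuInv * toXi b)) + Y1)
      - 2 * (toNu b - toXi (CL (qv 0)) * nuInv) * toXi c
      - 2 * (toNu c + toXi (CL (rv 0)) * nuInv) * toXi b = 0 := by
    apply mul_left_cancel₀ nuxi_ne
    rw [mul_zero]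
    linear_combination epsL2 * H1 + toXi c * e1n + toNu b * e2x - toNu c * e1x
      - toXi b * e2n - toXi (CL (qv 0)) * hZ - toXi (CL (rv 0)) * hY
  have f01 : epsL2 * (-(2 * (nuInv * toXi (dmap del b))) + dmap2 del Y1)
      - 2 * (xiL2 * (-(2 * (nuInv * toXi b)) + Y1))
      + 2 * (toXi (CL (qv 0)) * Xs)
      + 4 * ((toNu b - toXi (CL (qv 0)) * nuInv) * (1 + toXi a)) = 0 := by
    apply mul_left_cancel₀ nuxi_ne
    rw [mul_zero]
    linear_combination epsL2 * H2 - 2 * nuInv * (nuL - xiL2) * e1x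
      + 2 * toXi b * e3n + 2 * (1 + toNu a) * e1x - 2 * toNu b * e3x
      - 2 * (1 + toXi a) * e1n - 2 * xiL2 * hY + 2 * toXi (CL (qv 0)) * hX
  have f10 : epsL2 * (2 * (nuInv * toXi (dmap del c)) + dmap2 del Z1)
      + 2 * (toXi (CL (rv 0)) * Xs)
      + 2 * (xiL2 * (2 * (nuInv * toXi c) + Z1))
      + 4 * ((toNu c + toXi (CL (rv 0)) * nuInv) * (1 + toXi a)) = 0 := by
    apply mul_left_cancel₀ nuxi_ne
    rw [mul_zero]
    linear_combination epsL2 * H3 + 2 * nuInv * (nuL - xiL2) * e2x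
      + 2 * toNu c * e3x + 2 * (1 + toXi a) * e2n - 2 * toXi c * e3n
      - 2 * (1 + toNu a) * e2x + 2 * xiL2 * hZ + 2 * toXi (CL (rv 0)) * hX
  constructor
  · refine Matrix.ext fun i j => ?_
    fin_cases i <;> fin_cases j <;>
      simp only [Matrix.add_apply, Matrix.sub_apply, Matrix.smul_apply, smul_eq_mul,
        Matrix.map_apply, Matrix.mul_apply, Fin.sum_univ_two, UXi, RXi', nablaU, Umat, Rmat,
        Matrix.cons_val', Matrix.cons_val_zero, Matrix.cons_val_one, Matrix.head_cons,
        Matrix.empty_val', Matrix.cons_val_fin_one, Matrix.zero_apply, Fin.mk_zero, Fin.mk_one, Fin.isValue, Matrix.of_apply, Matrix.cons_val_zero, Matrix.cons_val_one, Matrix.head_cons, Matrix.head_fin_const,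
        toXi_neg, toXi_add, toXi_two, toXi_xiL,
        dmap2_mul, dmap2_add, dmap2_neg, dmap2_two, dmap2_nuInv, dmap2_toXi,
        dmap2_EI del hdel, zero_mul, mul_zero, add_zero, zero_add, neg_zero]
    · linear_combination (toXi (CL epsInv)) * f00
        + ((nabla D (CL (qv 0)) * toXi c + nabla D (CL (rv 0)) * toXi b)) * hE
        + (-(toXi (CL epsInv) * toXi c)) * hNq + (-(toXi (CL epsInv) * toXi b)) * hNr
    · linear_combination (toXi (CL epsInv)) * f01
        + (-((2:NLSL2) * (1 + toXi a) * nabla D (CL (qv 0)))) * hE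
        + ((2:NLSL2) * toXi (CL epsInv) * (1 + toXi a)) * hNq
    · linear_combination (toXi (CL epsInv)) * f10
        + (-((2:NLSL2) * (1 + toXi a) * nabla D (CL (rv 0)))) * hE
        + ((2:NLSL2) * toXi (CL epsInv) * (1 + toXi a)) * hNr
    · linear_combination (-(toXi (CL epsInv))) * f00
        + (-(nabla D (CL (qv 0)) * toXi c + nabla D (CL (rv 0)) * toXi b)) * hE
        + (toXi (CL epsInv) * toXi c) * hNq + (toXi (CL epsInv) * toXi b) * hNr
  · apply mul_left_cancel₀ nuxi_ne
    rw [mul_zero]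
    linear_combination (2 + 2 * toXi a) * hX + toXi c * hY + toXi b * hZ

end
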